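/- There exist real numbers ω_1,…,ω_n with ω_j > 0 for every j such that ∑_{j=1}^n ω_j Ψ_m(ζ_j) ζ_j^{−k} = 0 for every k = 1,…,m−1, if and only if {ξ_k}_{k=1}^m strictly interlaces {ζ_j}_{j=1}^n on 𝕊¹. -/
import Mathlib


/-- The node `ζ_j = e^{iθ_j}` on the unit circle. -/
noncomputable def zetaC (θ : ℕ → ℝ) (j : ℕ) : ℂ := Complex.exp (Complex.I * (θ j : ℂ))

/-- `Ψ_m(z) = ∏_{k=1}^m (z - ξ_k)` with `ξ_k = e^{iφ_k}` (1-based indexing). -/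
noncomputable def PsiC (m : ℕ) (φ : ℕ → ℝ) (z : ℂ) : ℂ :=
  ∏ k ∈ Finset.Icc 1 m, (z - Complex.exp (Complex.I * (φ k : ℂ)))

/-- The band `I_r = {j : φ_r < θ_j < φ_{r+1}}`, realised inside `Fin n`. -/
noncomputable def bandC (n : ℕ) (θ φ : ℕ → ℝ) (r : ℕ) : Finset (Fin n) :=
  Finset.univ.filter (fun j => φ r < θ ((j : ℕ) + 1) ∧ θ ((j : ℕ) + 1) < φ (r + 1))

open Complex Finset


lemma exp_sub_exp (a b : ℝ) :
    Complex.exp (Complex.I * a) - Complex.exp (Complex.I * b)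
      = 2 * Complex.I * Complex.exp (Complex.I * ((a + b)/2 : ℝ)) * (Real.sin ((a - b)/2) : ℂ) := by
  rw [Complex.ofReal_sin, Complex.sin]
  have h1 : Complex.I * a = Complex.I * ((a + b)/2 : ℝ) + (((a-b)/2 : ℝ) : ℂ) * Complex.I := by
    push_cast; ring
  have h2 : Complex.I * b = Complex.I * ((a + b)/2 : ℝ) + (-(((a-b)/2 : ℝ) : ℂ)) * Complex.I := by
    push_cast; ring
  rw [h1, h2, Complex.exp_add, Complex.exp_add]
  ring_nf
  rw [Complex.I_sq]
  ring

lemma prod_exp_sub (F : Finset ℕ) (α : ℝ) (β : ℕ → ℝ) :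
    ∏ k ∈ F, (Complex.exp (Complex.I * α) - Complex.exp (Complex.I * β k))
      = (2*Complex.I)^F.card
        * Complex.exp (Complex.I * (((F.card * α + ∑ k ∈ F, β k)/2 : ℝ) : ℂ))
        * ((∏ k ∈ F, Real.sin ((α - β k)/2) : ℝ) : ℂ) := by
  calc ∏ k ∈ F, (Complex.exp (Complex.I * α) - Complex.exp (Complex.I * β k))
      = ∏ k ∈ F, (2 * Complex.I * Complex.exp (Complex.I * ((α + β k)/2 : ℝ))
          * (Real.sin ((α - β k)/2) : ℂ)) := by
        exact Finset.prod_congr rfl fun k _ => exp_sub_exp α (β k)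
    _ = (2*Complex.I)^F.card
        * (∏ k ∈ F, Complex.exp (Complex.I * ((α + β k)/2 : ℝ)))
        * ((∏ k ∈ F, Real.sin ((α - β k)/2) : ℝ) : ℂ) := by
        rw [Finset.prod_mul_distrib, Finset.prod_mul_distrib, Finset.prod_const]
        push_cast
        ring
    _ = _ := by
        rw [← Complex.exp_sum]
        congr 2
        rw [← Finset.mul_sum]
        push_cast
        rw [← Finset.sum_div, Finset.sum_add_distrib, Finset.sum_const, nsmul_eq_mul]

lemma prod_sign_aux {S : Finset ℕ} {f : ℕ → ℝ} (h : ∀ i ∈ S, f i ≠ 0) :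
    0 < (-1 : ℝ)^((S.filter (fun i => f i < 0)).card) * ∏ i ∈ S, f i := by
  classical
  induction S using Finset.induction_on with
  | empty => simp
  | @insert a S ha ih =>
    have hane : f a ≠ 0 := h a (Finset.mem_insert_self a S)
    have ih' := ih (fun i hi => h i (Finset.mem_insert_of_mem hi))
    rw [Finset.filter_insert, Finset.prod_insert ha]
    rcases hane.lt_or_gt with hneg | hpos
    · rw [if_pos hneg, Finset.card_insert_of_notMem (by simp [ha]), pow_succ]
      nlinarith
    · rw [if_neg (not_lt.mpr hpos.le)]
      nlinarith
lemma sin_half_pos {x : ℝ} (h0 : 0 < x) (h2 : x < 2 * Real.pi) : 0 < Real.sin (x/2) :=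
  Real.sin_pos_of_pos_of_lt_pi (by linarith) (by linarith)

lemma sin_half_neg {x : ℝ} (h0 : x < 0) (h2 : -(2*Real.pi) < x) : Real.sin (x/2) < 0 := by
  have := Real.sin_pos_of_pos_of_lt_pi (x := -x/2) (by linarith) (by linarith)
  have : Real.sin (-(x/2)) > 0 := by rw [show -(x/2) = -x/2 by ring]; exact this
  rw [Real.sin_neg] at this; linarith

lemma exp_ne_exp {x y : ℝ} (hne : x ≠ y) (h : |x - y| < 2 * Real.pi) :
    Complex.exp (Complex.I * x) ≠ Complex.exp (Complex.I * y) := by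
  intro hexp
  rw [Complex.exp_eq_exp_iff_exists_int] at hexp
  obtain ⟨n, hn⟩ := hexp
  have hI : (Complex.I * x : ℂ) = Complex.I * (y + n * (2 * Real.pi)) := by
    rw [hn]; push_cast; ring
  have hr : (x : ℂ) = ((y + n * (2 * Real.pi) : ℝ) : ℂ) := by
    have := mul_left_cancel₀ Complex.I_ne_zero hI
    push_cast
    exact this
  have hx : x = y + n * (2 * Real.pi) := by exact_mod_cast hr
  have hpi := Real.pi_pos
  rcases eq_or_ne n 0 with rfl | hn0
  · simp at hx; exact hne (by linarith)
  · have : (1 : ℝ) ≤ |(n : ℝ)| := by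
      exact_mod_cast Int.one_le_abs hn0
    have : |x - y| = |(n:ℝ)| * (2 * Real.pi) := by
      rw [hx, show y + (n:ℝ) * (2*Real.pi) - y = (n:ℝ) * (2*Real.pi) by ring, abs_mul,
        abs_of_pos (by linarith : (0:ℝ) < 2*Real.pi)]
    nlinarith [abs_nonneg ((n:ℝ))]

open Polynomial in
lemma basis_coeff_top {s : Finset ℕ} {v : ℕ → ℂ} (hvs : Set.InjOn v s) {i : ℕ} (hi : i ∈ s) :
    (Lagrange.basis s v i).coeff (s.card - 1) = (∏ j ∈ s.erase i, (v i - v j))⁻¹ := by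
  classical
  unfold Lagrange.basis Lagrange.basisDivisor
  rw [Finset.prod_mul_distrib, ← map_prod]
  have hN : (∏ j ∈ s.erase i, (X - C (v j))).Monic :=
    monic_prod_of_monic _ _ (fun j _ => monic_X_sub_C (v j))
  have hdeg : (∏ j ∈ s.erase i, (X - C (v j))).natDegree = s.card - 1 := by
    rw [natDegree_prod_of_monic _ _ (fun j _ => monic_X_sub_C (v j))]
    simp [Finset.card_erase_of_mem hi]
  rw [Polynomial.coeff_C_mul, ← hdeg, Polynomial.coeff_natDegree, hN.leadingCoeff, mul_one,
    ← Finset.prod_inv_distrib]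

open Polynomial in
lemma lagrange_sum_zero {s : Finset ℕ} {v : ℕ → ℂ} (hvs : Set.InjOn v s) {t : ℕ}
    (ht : t + 2 ≤ s.card) :
    ∑ c ∈ s, v c ^ t / ∏ d ∈ s.erase c, (v c - v d) = 0 := by
  classical
  have hdeg : (X ^ t : ℂ[X]).degree < s.card := by
    rw [degree_X_pow]
    exact_mod_cast Nat.lt_of_lt_of_le (by omega) (le_refl s.card)
  have h := Lagrange.eq_interpolate hvs hdeg
  have hc := congrArg (fun p => Polynomial.coeff p (s.card - 1)) h
  simp only [Lagrange.interpolate_apply, Polynomial.finset_sum_coeff, Polynomial.coeff_C_mul,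
    Polynomial.coeff_X_pow, Polynomial.eval_pow, Polynomial.eval_X] at hc
  rw [if_neg (by omega)] at hc
  have : ∑ i ∈ s, v i ^ t * (Lagrange.basis s v i).coeff (s.card - 1)
      = ∑ i ∈ s, v i ^ t / ∏ j ∈ s.erase i, (v i - v j) := by
    refine Finset.sum_congr rfl fun i hi => ?_
    rw [basis_coeff_top hvs hi, div_eq_mul_inv]
  rw [this] at hc
  exact hc.symm

lemma chain_lt (f : ℕ → ℝ) (N : ℕ) (h : ∀ k, 1 ≤ k → k < N → f k < f (k+1)) :
    ∀ a b, 1 ≤ a → a < b → b ≤ N → f a < f b := by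
  intro a b ha hab hbN
  induction b with
  | zero => omega
  | succ b ih =>
    rcases Nat.lt_or_ge a b with h' | h'
    · exact lt_trans (ih (by omega) (by omega)) (h b (by omega) (by omega))
    · have : a = b := by omega
      subst this
      exact h a ha (by omega)

lemma config_lemma (m n : ℕ) (hm : 1 ≤ m) (hmn : m < n)
    (θ φ : ℕ → ℝ)
    (hφ : ∀ k, 1 ≤ k → k ≤ m → φ k < φ (k + 1))
    (hφp : φ (m + 1) = φ 1 + 2 * Real.pi)
    (hθ1 : φ 1 < θ 1)
    (hθ : ∀ j, 1 ≤ j → j < n → θ j < θ (j + 1))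
    (hθn : θ n < φ 1 + 2 * Real.pi)
    (hθφ : ∀ j k, 1 ≤ j → j ≤ n → 1 ≤ k → k ≤ m → θ j ≠ φ k)
    (g : ℕ → Fin n) (hg : ∀ c, 1 ≤ c → c ≤ m → g c ∈ bandC n θ φ c) :
    ∃ w : ℕ → ℝ, (∀ c, 1 ≤ c → c ≤ m → 0 < w c) ∧ ∀ k : ℕ, 1 ≤ k → k < m →
      ∑ c ∈ Finset.Icc 1 m, (w c : ℂ) * PsiC m φ (zetaC θ ((g c : ℕ)+1))
        * zetaC θ ((g c : ℕ)+1) ^ (-(k:ℤ)) = 0 := by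
  have hpi := Real.pi_pos
  set ϑ : ℕ → ℝ := fun c => θ ((g c : ℕ) + 1) with hϑdef
  -- φ monotone
  have hφlt : ∀ a b, 1 ≤ a → a < b → b ≤ m+1 → φ a < φ b :=
    chain_lt φ (m+1) (fun k hk1 hk2 => hφ k hk1 (by omega))
  have hφle : ∀ a b, 1 ≤ a → a ≤ b → b ≤ m+1 → φ a ≤ φ b := by
    intro a b ha hab hbm
    rcases eq_or_lt_of_le hab with rfl | h; · exact le_rfl
    · exact (hφlt a b ha h hbm).le
  have hθlt : ∀ a b, 1 ≤ a → a < b → b ≤ n → θ a < θ b := chain_lt θ n hθ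
  have hθle : ∀ a b, 1 ≤ a → a ≤ b → b ≤ n → θ a ≤ θ b := by
    intro a b ha hab hbm
    rcases eq_or_lt_of_le hab with rfl | h; · exact le_rfl
    · exact (hθlt a b ha h hbm).le
  -- windows
  have hθwin : ∀ j, 1 ≤ j → j ≤ n → φ 1 < θ j ∧ θ j < φ 1 + 2*Real.pi := by
    intro j h1 h2
    exact ⟨lt_of_lt_of_le hθ1 (hθle 1 j le_rfl h1 h2),
      lt_of_le_of_lt (hθle j n h1 h2 le_rfl) hθn⟩
  have hφwin : ∀ k, 1 ≤ k → k ≤ m → φ 1 ≤ φ k ∧ φ k < φ 1 + 2*Real.pi := by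
    intro k h1 h2
    refine ⟨hφle 1 k le_rfl h1 (by omega), ?_⟩
    calc φ k < φ (m+1) := hφlt k (m+1) h1 (by omega) le_rfl
      _ = φ 1 + 2*Real.pi := hφp
  -- band data
  have hband : ∀ c, 1 ≤ c → c ≤ m → φ c < ϑ c ∧ ϑ c < φ (c+1) := by
    intro c h1 h2
    have := hg c h1 h2
    simp only [bandC, Finset.mem_filter, Finset.mem_univ, true_and] at this
    exact this
  have hϑwin : ∀ c, 1 ≤ c → c ≤ m → φ 1 < ϑ c ∧ ϑ c < φ 1 + 2*Real.pi := by
    intro c h1 h2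
    exact hθwin ((g c : ℕ) + 1) (by omega) (by omega)
  have hϑorder : ∀ c d, 1 ≤ c → c < d → d ≤ m → ϑ c < ϑ d := by
    intro c d h1 h2 h3
    calc ϑ c < φ (c+1) := (hband c h1 (by omega)).2
      _ ≤ φ d := hφle (c+1) d (by omega) (by omega) (by omega)
      _ < ϑ d := (hband d (by omega) h3).1
  -- sine products
  set sp : ℕ → ℝ := fun c => ∏ i ∈ Finset.Icc 1 m, Real.sin ((ϑ c - φ i)/2) with hspdef
  set up : ℕ → ℝ := fun c => ∏ d ∈ (Finset.Icc 1 m).erase c, Real.sin ((ϑ c - ϑ d)/2) with hupdef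
  -- sign characterizations
  have hsφsign : ∀ c, 1 ≤ c → c ≤ m → ∀ i, 1 ≤ i → i ≤ m →
      (Real.sin ((ϑ c - φ i)/2) < 0 ↔ c < i) ∧ Real.sin ((ϑ c - φ i)/2) ≠ 0 := by
    intro c h1 h2 i hi1 hi2
    have hw := hϑwin c h1 h2
    have hbc := hband c h1 h2
    have hfw := hφwin i hi1 hi2
    have hne : ϑ c ≠ φ i := hθφ _ _ (by omega) (by omega) hi1 hi2
    rcases lt_or_gt_of_ne hne with hlt | hgt
    · have hs : Real.sin ((ϑ c - φ i)/2) < 0 := sin_half_neg (by linarith) (by linarith)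
      have hck : c < i := by
        by_contra hcon
        have : φ i ≤ φ c := hφle i c hi1 (by omega) (by omega)
        linarith [hbc.1]
      exact ⟨iff_of_true hs hck, ne_of_lt hs⟩
    · have hs : 0 < Real.sin ((ϑ c - φ i)/2) := sin_half_pos (by linarith) (by linarith)
      have hck : ¬ c < i := by
        intro hcon
        have : φ (c+1) ≤ φ i := hφle (c+1) i (by omega) (by omega) (by omega)
        linarith [hbc.2]
      exact ⟨iff_of_false (by linarith) hck, ne_of_gt hs⟩
  have hsϑsign : ∀ c, 1 ≤ c → c ≤ m → ∀ d, 1 ≤ d → d ≤ m → d ≠ c →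
      (Real.sin ((ϑ c - ϑ d)/2) < 0 ↔ c < d) ∧ Real.sin ((ϑ c - ϑ d)/2) ≠ 0 := by
    intro c h1 h2 d hd1 hd2 hdc
    have hwc := hϑwin c h1 h2
    have hwd := hϑwin d hd1 hd2
    rcases lt_or_gt_of_ne hdc with hlt | hgt
    · have : ϑ d < ϑ c := hϑorder d c hd1 hlt h2
      have hs : 0 < Real.sin ((ϑ c - ϑ d)/2) := sin_half_pos (by linarith) (by linarith)
      exact ⟨iff_of_false (by linarith) (by omega), ne_of_gt hs⟩
    · have : ϑ c < ϑ d := hϑorder c d h1 hgt hd2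
      have hs : Real.sin ((ϑ c - ϑ d)/2) < 0 := sin_half_neg (by linarith) (by linarith)
      exact ⟨iff_of_true hs hgt, ne_of_lt hs⟩
  -- positivity of sp * up
  have key_pos : ∀ c, 1 ≤ c → c ≤ m → 0 < sp c * up c := by
    intro c h1 h2
    have hfs : (Finset.Icc 1 m).filter (fun i => Real.sin ((ϑ c - φ i)/2) < 0)
        = Finset.Icc (c+1) m := by
      ext i
      simp only [Finset.mem_filter, Finset.mem_Icc]
      constructor
      · rintro ⟨⟨hi1, hi2⟩, hneg⟩
        exact ⟨(hsφsign c h1 h2 i hi1 hi2).1.mp hneg, hi2⟩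
      · rintro ⟨hi1, hi2⟩
        exact ⟨⟨by omega, hi2⟩, (hsφsign c h1 h2 i (by omega) hi2).1.mpr (by omega)⟩
    have hfu : ((Finset.Icc 1 m).erase c).filter (fun d => Real.sin ((ϑ c - ϑ d)/2) < 0)
        = Finset.Icc (c+1) m := by
      ext d
      simp only [Finset.mem_filter, Finset.mem_erase, Finset.mem_Icc]
      constructor
      · rintro ⟨⟨hdc, hd1, hd2⟩, hneg⟩
        exact ⟨by
          have := (hsϑsign c h1 h2 d hd1 hd2 hdc).1.mp hneg
          omega, hd2⟩
      · rintro ⟨hd1, hd2⟩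
        exact ⟨⟨by omega, by omega, hd2⟩, (hsϑsign c h1 h2 d (by omega) hd2 (by omega)).1.mpr (by omega)⟩
    have hsppos := prod_sign_aux (S := Finset.Icc 1 m)
      (f := fun i => Real.sin ((ϑ c - φ i)/2)) (by
        intro i hi
        rw [Finset.mem_Icc] at hi
        exact (hsφsign c h1 h2 i hi.1 hi.2).2)
    have huppos := prod_sign_aux (S := (Finset.Icc 1 m).erase c)
      (f := fun d => Real.sin ((ϑ c - ϑ d)/2)) (by
        intro d hd
        rw [Finset.mem_erase, Finset.mem_Icc] at hd
        exact (hsϑsign c h1 h2 d hd.2.1 hd.2.2 hd.1).2)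
    rw [hfs] at hsppos
    rw [hfu] at huppos
    have hA : ((-1:ℝ)^((Finset.Icc (c+1) m).card)) * ((-1:ℝ)^((Finset.Icc (c+1) m).card)) = 1 := by
      rw [← mul_pow]
      norm_num
    nlinarith [hsppos, huppos]
  refine ⟨fun c => (sp c * up c)⁻¹, fun c h1 h2 => inv_pos.mpr (key_pos c h1 h2), ?_⟩
  intro k hk1 hk2
  have hϑc : ∀ c, θ ((g c : ℕ)+1) = ϑ c := fun _ => rfl
  simp only [zetaC, PsiC, hϑc]
  have hinj : Set.InjOn (fun c => Complex.exp (Complex.I * ((ϑ c : ℝ) : ℂ))) (Finset.Icc 1 m) := by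
    intro c hc d hd hcd
    simp only [Finset.coe_Icc, Set.mem_Icc] at hc hd
    by_contra hne
    have hϑne : ϑ c ≠ ϑ d := by
      rcases lt_or_gt_of_ne hne with h | h
      · exact ne_of_lt (hϑorder c d hc.1 h hd.2)
      · exact (ne_of_lt (hϑorder d c hd.1 h hc.2)).symm
    have hwc := hϑwin c hc.1 hc.2
    have hwd := hϑwin d hd.1 hd.2
    exact exp_ne_exp hϑne (by rw [abs_sub_lt_iff]; constructor <;> linarith) hcd
  have hcard : (Finset.Icc 1 m).card = m := by
    rw [Nat.card_Icc]
    omega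
  have key : ∀ c ∈ Finset.Icc 1 m,
      ((((sp c * up c)⁻¹ : ℝ)) : ℂ)
        * (∏ i ∈ Finset.Icc 1 m, (Complex.exp (Complex.I * ((ϑ c : ℝ) : ℂ)) - Complex.exp (Complex.I * ((φ i : ℝ) : ℂ))))
        * Complex.exp (Complex.I * ((ϑ c : ℝ) : ℂ)) ^ (-(k:ℤ))
      = ((2*Complex.I)^(2*m-1)
          * Complex.exp (Complex.I * (((((∑ x ∈ Finset.Icc 1 m, ϑ x) + ∑ i ∈ Finset.Icc 1 m, φ i)/2 : ℝ)) : ℂ)))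
        * (Complex.exp (Complex.I * ((ϑ c : ℝ) : ℂ)) ^ (m-1-k)
          / ∏ d ∈ (Finset.Icc 1 m).erase c, (Complex.exp (Complex.I * ((ϑ c : ℝ) : ℂ)) - Complex.exp (Complex.I * ((ϑ d : ℝ) : ℂ)))) := by
    intro c hc
    rw [Finset.mem_Icc] at hc
    have hcm : c ∈ Finset.Icc 1 m := Finset.mem_Icc.mpr hc
    have hspne : sp c ≠ 0 := left_ne_zero_of_mul (key_pos c hc.1 hc.2).ne'
    have hupne : up c ≠ 0 := right_ne_zero_of_mul (key_pos c hc.1 hc.2).ne'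
    have h1 := prod_exp_sub (Finset.Icc 1 m) (ϑ c) φ
    rw [hcard] at h1
    have h2 := prod_exp_sub ((Finset.Icc 1 m).erase c) (ϑ c) ϑ
    rw [Finset.card_erase_of_mem hcm, hcard, Finset.sum_erase_eq_sub hcm] at h2
    have h3 : Complex.exp (Complex.I * ((ϑ c : ℝ) : ℂ)) ^ (-(k:ℤ))
        = Complex.exp (((-(k:ℤ) : ℤ) : ℂ) * (Complex.I * ((ϑ c : ℝ) : ℂ))) :=
      (Complex.exp_int_mul _ _).symm
    have h4 : Complex.exp (Complex.I * ((ϑ c : ℝ) : ℂ)) ^ (m-1-k)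
        = Complex.exp (((m-1-k : ℕ) : ℂ) * (Complex.I * ((ϑ c : ℝ) : ℂ))) :=
      (Complex.exp_nat_mul _ (m-1-k)).symm
    have hprodne : (∏ d ∈ (Finset.Icc 1 m).erase c,
        (Complex.exp (Complex.I * ((ϑ c : ℝ) : ℂ)) - Complex.exp (Complex.I * ((ϑ d : ℝ) : ℂ)))) ≠ 0 := by
      rw [h2]
      refine mul_ne_zero (mul_ne_zero (pow_ne_zero _ (by simp [Complex.I_ne_zero])) (Complex.exp_ne_zero _)) ?_
      exact_mod_cast hupne
    rw [h1, h3, h4, mul_div_assoc', eq_div_iff hprodne, h2,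
      show (∏ i ∈ Finset.Icc 1 m, Real.sin ((ϑ c - φ i)/2)) = sp c from rfl,
      show (∏ d ∈ (Finset.Icc 1 m).erase c, Real.sin ((ϑ c - ϑ d)/2)) = up c from rfl,
      show 2*m-1 = m+(m-1) from by omega, pow_add]
    have hE : Complex.exp (Complex.I * ((((m : ℝ) * ϑ c + ∑ i ∈ Finset.Icc 1 m, φ i) / 2 : ℝ) : ℂ))
        * Complex.exp (((-(k:ℤ) : ℤ) : ℂ) * (Complex.I * ((ϑ c : ℝ) : ℂ)))
        * Complex.exp (Complex.I * ((((m-1 : ℕ) : ℝ) * ϑ c + ((∑ x ∈ Finset.Icc 1 m, ϑ x) - ϑ c)) / 2 : ℝ))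
        = Complex.exp (Complex.I * (((((∑ x ∈ Finset.Icc 1 m, ϑ x) + ∑ i ∈ Finset.Icc 1 m, φ i)/2 : ℝ)) : ℂ))
          * Complex.exp (((m-1-k : ℕ) : ℂ) * (Complex.I * ((ϑ c : ℝ) : ℂ))) := by
      rw [← Complex.exp_add, ← Complex.exp_add, ← Complex.exp_add]
      congr 1
      push_cast [Nat.cast_sub (show k ≤ m-1 by omega), Nat.cast_sub (show 1 ≤ m from hm)]
      ring
    have hmul : (((sp c * up c)⁻¹ : ℝ) : ℂ) * ((sp c : ℝ) : ℂ) * ((up c : ℝ) : ℂ) = 1 := by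
      push_cast
      field_simp
      rw [div_self (mul_ne_zero (by exact_mod_cast hspne) (by exact_mod_cast hupne))]
    linear_combination
      ((2*Complex.I)^m * (2*Complex.I)^(m-1)
        * (((sp c * up c)⁻¹ : ℝ) : ℂ) * ((sp c : ℝ) : ℂ) * ((up c : ℝ) : ℂ)) * hE
      + ((2*Complex.I)^m * (2*Complex.I)^(m-1)
        * Complex.exp (Complex.I * (((((∑ x ∈ Finset.Icc 1 m, ϑ x) + ∑ i ∈ Finset.Icc 1 m, φ i)/2 : ℝ)) : ℂ))
        * Complex.exp (((m-1-k : ℕ) : ℂ) * (Complex.I * ((ϑ c : ℝ) : ℂ)))) * hmul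
  calc ∑ c ∈ Finset.Icc 1 m,
        ((((sp c * up c)⁻¹ : ℝ)) : ℂ)
          * (∏ i ∈ Finset.Icc 1 m, (Complex.exp (Complex.I * ((ϑ c : ℝ) : ℂ)) - Complex.exp (Complex.I * ((φ i : ℝ) : ℂ))))
          * Complex.exp (Complex.I * ((ϑ c : ℝ) : ℂ)) ^ (-(k:ℤ))
      = ∑ c ∈ Finset.Icc 1 m, ((2*Complex.I)^(2*m-1)
          * Complex.exp (Complex.I * (((((∑ x ∈ Finset.Icc 1 m, ϑ x) + ∑ i ∈ Finset.Icc 1 m, φ i)/2 : ℝ)) : ℂ)))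
        * (Complex.exp (Complex.I * ((ϑ c : ℝ) : ℂ)) ^ (m-1-k)
          / ∏ d ∈ (Finset.Icc 1 m).erase c, (Complex.exp (Complex.I * ((ϑ c : ℝ) : ℂ)) - Complex.exp (Complex.I * ((ϑ d : ℝ) : ℂ)))) :=
        Finset.sum_congr rfl key
    _ = ((2*Complex.I)^(2*m-1)
          * Complex.exp (Complex.I * (((((∑ x ∈ Finset.Icc 1 m, ϑ x) + ∑ i ∈ Finset.Icc 1 m, φ i)/2 : ℝ)) : ℂ)))
        * ∑ c ∈ Finset.Icc 1 m, (Complex.exp (Complex.I * ((ϑ c : ℝ) : ℂ)) ^ (m-1-k)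
          / ∏ d ∈ (Finset.Icc 1 m).erase c, (Complex.exp (Complex.I * ((ϑ c : ℝ) : ℂ)) - Complex.exp (Complex.I * ((ϑ d : ℝ) : ℂ)))) := by
        rw [Finset.mul_sum]
    _ = 0 := by
        rw [lagrange_sum_zero hinj (by rw [hcard]; omega), mul_zero]

lemma exists_band (m n : ℕ) (hm : 1 ≤ m) (hmn : m < n)
    (θ φ : ℕ → ℝ)
    (hφ : ∀ k, 1 ≤ k → k ≤ m → φ k < φ (k + 1))
    (hφp : φ (m + 1) = φ 1 + 2 * Real.pi)
    (hθ1 : φ 1 < θ 1)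
    (hθ : ∀ j, 1 ≤ j → j < n → θ j < θ (j + 1))
    (hθn : θ n < φ 1 + 2 * Real.pi)
    (hθφ : ∀ j k, 1 ≤ j → j ≤ n → 1 ≤ k → k ≤ m → θ j ≠ φ k) :
    ∀ j : Fin n, ∃ r, 1 ≤ r ∧ r ≤ m ∧ j ∈ bandC n θ φ r := by
  intro j
  have hθlt : ∀ a b, 1 ≤ a → a < b → b ≤ n → θ a < θ b := chain_lt θ n hθ
  have hθle : ∀ a b, 1 ≤ a → a ≤ b → b ≤ n → θ a ≤ θ b := by
    intro a b ha hab hbm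
    rcases eq_or_lt_of_le hab with rfl | h; · exact le_rfl
    · exact (hθlt a b ha h hbm).le
  set x := θ ((j : ℕ) + 1) with hx
  have hjn : (j : ℕ) + 1 ≤ n := j.2
  have hx1 : φ 1 < x := lt_of_lt_of_le hθ1 (hθle 1 _ le_rfl (by omega) hjn)
  have hxn : x < φ 1 + 2*Real.pi := lt_of_le_of_lt (hθle _ n (by omega) hjn le_rfl) hθn
  classical
  set S := (Finset.Icc 1 m).filter (fun r => φ r < x) with hS
  have h1S : (1 : ℕ) ∈ S := by
    simp only [hS, Finset.mem_filter, Finset.mem_Icc]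
    exact ⟨⟨le_rfl, hm⟩, hx1⟩
  have hSne : S.Nonempty := ⟨1, h1S⟩
  set r := S.max' hSne with hr
  have hrS : r ∈ S := S.max'_mem hSne
  simp only [hS, Finset.mem_filter, Finset.mem_Icc] at hrS
  refine ⟨r, hrS.1.1, hrS.1.2, ?_⟩
  simp only [bandC, Finset.mem_filter, Finset.mem_univ, true_and]
  refine ⟨hrS.2, ?_⟩
  rcases eq_or_lt_of_le hrS.1.2 with hrm | hrm
  · rw [hrm, hφp]
    exact hxn
  · by_contra hcon
    push_neg at hcon
    have hne : x ≠ φ (r+1) := hθφ _ _ (by omega) hjn (by omega) (by omega)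
    have : φ (r+1) < x := lt_of_le_of_ne hcon (Ne.symm hne)
    have : r + 1 ∈ S := by
      simp only [hS, Finset.mem_filter, Finset.mem_Icc]
      exact ⟨⟨by omega, by omega⟩, this⟩
    have := S.le_max' _ this
    omega

open Polynomial in
lemma forward_dir (m n : ℕ) (hm : 1 ≤ m) (hmn : m < n)
    (θ φ : ℕ → ℝ)
    (hφ : ∀ k, 1 ≤ k → k ≤ m → φ k < φ (k + 1))
    (hφp : φ (m + 1) = φ 1 + 2 * Real.pi)
    (hθ1 : φ 1 < θ 1)
    (hθ : ∀ j, 1 ≤ j → j < n → θ j < θ (j + 1))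
    (hθn : θ n < φ 1 + 2 * Real.pi)
    (hθφ : ∀ j k, 1 ≤ j → j ≤ n → 1 ≤ k → k ≤ m → θ j ≠ φ k)
    (ω : Fin n → ℝ) (hωpos : ∀ j, 0 < ω j)
    (hωeq : ∀ k : ℕ, 1 ≤ k → k < m →
      ∑ j : Fin n, (ω j : ℂ) * PsiC m φ (zetaC θ ((j : ℕ) + 1))
        * zetaC θ ((j : ℕ) + 1) ^ (-(k : ℤ)) = 0) :
    ∀ r, 1 ≤ r → r ≤ m → (bandC n θ φ r).Nonempty := by
  classical
  have hpi := Real.pi_pos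
  have hφlt : ∀ a b, 1 ≤ a → a < b → b ≤ m+1 → φ a < φ b :=
    chain_lt φ (m+1) (fun k hk1 hk2 => hφ k hk1 (by omega))
  have hφle : ∀ a b, 1 ≤ a → a ≤ b → b ≤ m+1 → φ a ≤ φ b := by
    intro a b ha hab hbm
    rcases eq_or_lt_of_le hab with rfl | h; · exact le_rfl
    · exact (hφlt a b ha h hbm).le
  have hθlt : ∀ a b, 1 ≤ a → a < b → b ≤ n → θ a < θ b := chain_lt θ n hθ
  have hθle : ∀ a b, 1 ≤ a → a ≤ b → b ≤ n → θ a ≤ θ b := by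
    intro a b ha hab hbm
    rcases eq_or_lt_of_le hab with rfl | h; · exact le_rfl
    · exact (hθlt a b ha h hbm).le
  have hθwin : ∀ j, 1 ≤ j → j ≤ n → φ 1 < θ j ∧ θ j < φ 1 + 2*Real.pi := by
    intro j h1 h2
    exact ⟨lt_of_lt_of_le hθ1 (hθle 1 j le_rfl h1 h2),
      lt_of_le_of_lt (hθle j n h1 h2 le_rfl) hθn⟩
  have hφwin : ∀ k, 1 ≤ k → k ≤ m → φ 1 ≤ φ k ∧ φ k < φ 1 + 2*Real.pi := by
    intro k h1 h2
    refine ⟨hφle 1 k le_rfl h1 (by omega), ?_⟩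
    calc φ k < φ (m+1) := hφlt k (m+1) h1 (by omega) le_rfl
      _ = φ 1 + 2*Real.pi := hφp
  intro r hr1 hr2
  by_contra hempty
  rw [Finset.not_nonempty_iff_eq_empty] at hempty
  have hnotin : ∀ j : Fin n, ¬(φ r < θ ((j:ℕ)+1) ∧ θ ((j:ℕ)+1) < φ (r+1)) := by
    intro j
    have := Finset.eq_empty_iff_forall_notMem.mp hempty j
    simp only [bandC, Finset.mem_filter, Finset.mem_univ, true_and] at this
    exact this
  -- m = 1 is impossible
  rcases eq_or_lt_of_le hm with hm1 | hm2
  · have hr1' : r = 1 := by omega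
    have j0 : Fin n := ⟨0, by omega⟩
    refine hnotin ⟨0, by omega⟩ ?_
    subst hr1'
    constructor
    · simpa using (hθwin 1 le_rfl (by omega)).1
    · rw [show (1:ℕ)+1 = m+1 by omega, hφp]
      simpa using (hθwin 1 le_rfl (by omega)).2
  -- now 2 ≤ m
  obtain ⟨a, b, ha1, hab, hbm, σ, hσ, hsgn⟩ :
      ∃ a b : ℕ, 1 ≤ a ∧ a < b ∧ b ≤ m ∧ ∃ σ : ℝ, (σ = 1 ∨ σ = -1) ∧
        ∀ j : Fin n, 0 < σ * (Real.sin ((θ ((j:ℕ)+1) - φ a)/2)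
          * Real.sin ((θ ((j:ℕ)+1) - φ b)/2)) := by
    rcases eq_or_lt_of_le hr2 with hrm | hrm
    · -- r = m : all nodes below φ m ; take a = 1, b = m, σ = -1
      refine ⟨1, m, le_rfl, by omega, le_rfl, -1, Or.inr rfl, ?_⟩
      intro j
      have hw := hθwin ((j:ℕ)+1) (by omega) j.2
      have hfw := hφwin m (by omega) le_rfl
      have hxm : θ ((j:ℕ)+1) < φ m := by
        have hne : θ ((j:ℕ)+1) ≠ φ m := hθφ _ _ (by omega) j.2 (by omega) le_rfl
        have := hnotin j
        rw [hrm] at this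
        push_neg at this
        rcases lt_or_ge (φ m) (θ ((j:ℕ)+1)) with h | h
        · exfalso
          have := this h
          rw [hφp] at this
          linarith [hw.2]
        · exact lt_of_le_of_ne h hne
      have hs1 : 0 < Real.sin ((θ ((j:ℕ)+1) - φ 1)/2) :=
        sin_half_pos (by linarith [hw.1]) (by linarith [hw.2])
      have hs2 : Real.sin ((θ ((j:ℕ)+1) - φ m)/2) < 0 :=
        sin_half_neg (by linarith) (by linarith [hw.1, hfw.2])
      nlinarith
    · -- r < m : take a = r, b = r+1, σ = 1
      refine ⟨r, r+1, hr1, by omega, by omega, 1, Or.inl rfl, ?_⟩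
      intro j
      have hw := hθwin ((j:ℕ)+1) (by omega) j.2
      have hfwr := hφwin r hr1 (by omega)
      have hfwr1 := hφwin (r+1) (by omega) (by omega)
      have hner : θ ((j:ℕ)+1) ≠ φ r := hθφ _ _ (by omega) j.2 hr1 (by omega)
      have hner1 : θ ((j:ℕ)+1) ≠ φ (r+1) := hθφ _ _ (by omega) j.2 (by omega) (by omega)
      have hcase := hnotin j
      push_neg at hcase
      rcases lt_or_ge (θ ((j:ℕ)+1)) (φ r) with h | h
      · have hs1 : Real.sin ((θ ((j:ℕ)+1) - φ r)/2) < 0 :=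
          sin_half_neg (by linarith) (by linarith [hw.1, hfwr.2])
        have hrr1 : φ r < φ (r+1) := hφ r hr1 (by omega)
        have hs2 : Real.sin ((θ ((j:ℕ)+1) - φ (r+1))/2) < 0 :=
          sin_half_neg (by linarith) (by linarith [hw.1, hfwr1.2])
        nlinarith
      · have h' : φ r < θ ((j:ℕ)+1) := lt_of_le_of_ne h (Ne.symm hner)
        have h'' : φ (r+1) < θ ((j:ℕ)+1) := lt_of_le_of_ne (hcase h') (Ne.symm hner1)
        have hs1 : 0 < Real.sin ((θ ((j:ℕ)+1) - φ r)/2) :=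
          sin_half_pos (by linarith) (by linarith [hw.2, hfwr.1])
        have hs2 : 0 < Real.sin ((θ ((j:ℕ)+1) - φ (r+1))/2) :=
          sin_half_pos (by linarith) (by linarith [hw.2, hfwr1.1])
        nlinarith
  -- now the polynomial argument
  have haI : a ∈ Finset.Icc 1 m := Finset.mem_Icc.mpr ⟨ha1, by omega⟩
  have hbIa : b ∈ (Finset.Icc 1 m).erase a :=
    Finset.mem_erase.mpr ⟨by omega, Finset.mem_Icc.mpr ⟨by omega, hbm⟩⟩
  set E := ((Finset.Icc 1 m).erase a).erase b with hEdef
  have hEcard : E.card = m - 2 := by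
    rw [hEdef, Finset.card_erase_of_mem hbIa, Finset.card_erase_of_mem haI, Nat.card_Icc]
    omega
  have hsplitR : ∀ f : ℕ → ℝ, ∏ i ∈ Finset.Icc 1 m, f i = f a * (f b * ∏ i ∈ E, f i) := by
    intro f
    rw [hEdef, Finset.mul_prod_erase _ f hbIa, Finset.mul_prod_erase _ f haI]
  have hEsub : ∀ i ∈ E, 1 ≤ i ∧ i ≤ m := by
    intro i hi
    rw [hEdef, Finset.mem_erase, Finset.mem_erase, Finset.mem_Icc] at hi
    exact hi.2.2
  set Qp : Polynomial ℂ :=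
    ∏ i ∈ E, (Polynomial.X - Polynomial.C (Complex.exp (Complex.I * ((φ i : ℝ) : ℂ)))) with hQpdef
  have hQdeg : Qp.natDegree = m - 2 := by
    rw [hQpdef, Polynomial.natDegree_prod_of_monic _ _ (fun i _ => Polynomial.monic_X_sub_C _)]
    simp only [Polynomial.natDegree_X_sub_C]
    rw [Finset.sum_const, smul_eq_mul, mul_one, hEcard]
  have hQeval : ∀ z : ℂ, Qp.eval z = ∏ i ∈ E, (z - Complex.exp (Complex.I * ((φ i : ℝ) : ℂ))) := by
    intro z
    rw [hQpdef, Polynomial.eval_prod]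
    simp
  have hzne : ∀ j : Fin n, zetaC θ ((j:ℕ)+1) ≠ 0 := fun j => Complex.exp_ne_zero _
  -- Claim A : the combined moment vanishes
  have SM0 : ∑ j : Fin n, (ω j : ℂ) * PsiC m φ (zetaC θ ((j:ℕ)+1)) * Qp.eval (zetaC θ ((j:ℕ)+1))
      * zetaC θ ((j:ℕ)+1) ^ (-((m-1 : ℕ):ℤ)) = 0 := by
    have per_j : ∀ j : Fin n, (ω j : ℂ) * PsiC m φ (zetaC θ ((j:ℕ)+1)) * Qp.eval (zetaC θ ((j:ℕ)+1))
        * zetaC θ ((j:ℕ)+1) ^ (-((m-1 : ℕ):ℤ))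
        = ∑ tt ∈ Finset.range (m-1), Qp.coeff tt *
            ((ω j : ℂ) * PsiC m φ (zetaC θ ((j:ℕ)+1)) * zetaC θ ((j:ℕ)+1) ^ (-((m-1-tt : ℕ):ℤ))) := by
      intro j
      rw [Polynomial.eval_eq_sum_range' (show Qp.natDegree < m-1 by omega)]
      rw [Finset.mul_sum, Finset.sum_mul]
      refine Finset.sum_congr rfl fun tt htt => ?_
      rw [Finset.mem_range] at htt
      have hzz : (zetaC θ ((j:ℕ)+1))^(tt) * (zetaC θ ((j:ℕ)+1))^(-((m-1 : ℕ):ℤ))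
          = (zetaC θ ((j:ℕ)+1))^(-((m-1-tt : ℕ):ℤ)) := by
        rw [← zpow_natCast (zetaC θ ((j:ℕ)+1)) tt, ← zpow_add₀ (hzne j)]
        congr 1
        push_cast [Nat.cast_sub (show tt ≤ m - 1 by omega), Nat.cast_sub (show 1 ≤ m from hm)]
        ring
      rw [← hzz]
      ring
    calc ∑ j : Fin n, (ω j : ℂ) * PsiC m φ (zetaC θ ((j:ℕ)+1)) * Qp.eval (zetaC θ ((j:ℕ)+1))
          * zetaC θ ((j:ℕ)+1) ^ (-((m-1 : ℕ):ℤ))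
        = ∑ j : Fin n, ∑ tt ∈ Finset.range (m-1), Qp.coeff tt *
            ((ω j : ℂ) * PsiC m φ (zetaC θ ((j:ℕ)+1)) * zetaC θ ((j:ℕ)+1) ^ (-((m-1-tt : ℕ):ℤ))) :=
          Finset.sum_congr rfl (fun j _ => per_j j)
      _ = ∑ tt ∈ Finset.range (m-1), ∑ j : Fin n, Qp.coeff tt *
            ((ω j : ℂ) * PsiC m φ (zetaC θ ((j:ℕ)+1)) * zetaC θ ((j:ℕ)+1) ^ (-((m-1-tt : ℕ):ℤ))) :=
          Finset.sum_comm
      _ = 0 := by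
          refine Finset.sum_eq_zero fun tt htt => ?_
          rw [Finset.mem_range] at htt
          rw [← Finset.mul_sum, hωeq (m-1-tt) (by omega) (by omega), mul_zero]
  -- Claim B : the combined moment equals μ * T
  obtain ⟨T, hTdef⟩ : ∃ T : ℝ, T = ∑ j : Fin n, ω j * ((∏ i ∈ E, Real.sin ((θ ((j:ℕ)+1) - φ i)/2)) ^ 2
      * (Real.sin ((θ ((j:ℕ)+1) - φ a)/2) * Real.sin ((θ ((j:ℕ)+1) - φ b)/2))) := ⟨_, rfl⟩
  obtain ⟨μ, hμdef⟩ : ∃ μ : ℂ, μ = (2*Complex.I)^m * (2*Complex.I)^(m-2)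
      * Complex.exp (Complex.I * ((((∑ i ∈ Finset.Icc 1 m, φ i) + ∑ i ∈ E, φ i)/2 : ℝ) : ℂ)) := ⟨_, rfl⟩
  have SMμ : ∑ j : Fin n, (ω j : ℂ) * PsiC m φ (zetaC θ ((j:ℕ)+1)) * Qp.eval (zetaC θ ((j:ℕ)+1))
      * zetaC θ ((j:ℕ)+1) ^ (-((m-1 : ℕ):ℤ)) = μ * (T : ℂ) := by
    rw [hTdef, hμdef, Complex.ofReal_sum, Finset.mul_sum]
    refine Finset.sum_congr rfl fun j _ => ?_
    have h1 := prod_exp_sub (Finset.Icc 1 m) (θ ((j:ℕ)+1)) φ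
    rw [show (Finset.Icc 1 m).card = m by rw [Nat.card_Icc]; omega] at h1
    have h2 := prod_exp_sub E (θ ((j:ℕ)+1)) φ
    rw [hEcard] at h2
    have h3 : zetaC θ ((j:ℕ)+1) ^ (-((m-1 : ℕ):ℤ))
        = Complex.exp ((( -((m-1 : ℕ):ℤ) : ℤ) : ℂ) * (Complex.I * ((θ ((j:ℕ)+1) : ℝ) : ℂ))) :=
      (Complex.exp_int_mul _ _).symm
    have hsines : ∏ i ∈ Finset.Icc 1 m, Real.sin ((θ ((j:ℕ)+1) - φ i)/2)
        = Real.sin ((θ ((j:ℕ)+1) - φ a)/2) * (Real.sin ((θ ((j:ℕ)+1) - φ b)/2)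
          * ∏ i ∈ E, Real.sin ((θ ((j:ℕ)+1) - φ i)/2)) :=
      hsplitR _
    have hE5 : Complex.exp (Complex.I * (((((m:ℕ) : ℝ) * θ ((j:ℕ)+1) + ∑ k ∈ Finset.Icc 1 m, φ k)/2 : ℝ) : ℂ))
        * Complex.exp (Complex.I * (((((m-2 : ℕ) : ℝ)) * θ ((j:ℕ)+1) + ∑ k ∈ E, φ k)/2 : ℝ))
        * Complex.exp ((( -((m-1 : ℕ):ℤ) : ℤ) : ℂ) * (Complex.I * ((θ ((j:ℕ)+1) : ℝ) : ℂ)))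
        = Complex.exp (Complex.I * ((((∑ i ∈ Finset.Icc 1 m, φ i) + ∑ i ∈ E, φ i)/2 : ℝ) : ℂ)) := by
      rw [← Complex.exp_add, ← Complex.exp_add]
      congr 1
      push_cast [Nat.cast_sub (show 2 ≤ m by omega), Nat.cast_sub (show 1 ≤ m from hm)]
      ring
    simp only [PsiC, zetaC] at h1 h3 ⊢
    rw [hQeval, h1, h2, h3, hsines]
    simp only [Complex.ofReal_mul, Complex.ofReal_pow]
    linear_combination ((2*Complex.I)^m * (2*Complex.I)^(m-2) * ((ω j : ℝ) : ℂ)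
      * ((Real.sin ((θ ((j:ℕ)+1) - φ a)/2) : ℝ) : ℂ) * ((Real.sin ((θ ((j:ℕ)+1) - φ b)/2) : ℝ) : ℂ)
      * ((∏ i ∈ E, Real.sin ((θ ((j:ℕ)+1) - φ i)/2) : ℝ) : ℂ)
      * ((∏ i ∈ E, Real.sin ((θ ((j:ℕ)+1) - φ i)/2) : ℝ) : ℂ)) * hE5
  -- combine
  have hμne : μ ≠ 0 := by
    rw [hμdef]
    refine mul_ne_zero (mul_ne_zero (pow_ne_zero _ ?_) (pow_ne_zero _ ?_)) (Complex.exp_ne_zero _)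
      <;> simp [Complex.I_ne_zero]
  have hT0 : T = 0 := by
    have := SM0
    rw [SMμ] at this
    rcases mul_eq_zero.mp this with h | h
    · exact absurd h hμne
    · exact_mod_cast h
  have hTpos : 0 < σ * T := by
    rw [hTdef, Finset.mul_sum]
    have hne : Nonempty (Fin n) := ⟨⟨0, by omega⟩⟩
    refine Finset.sum_pos (fun j _ => ?_) Finset.univ_nonempty
    have hw := hθwin ((j:ℕ)+1) (by omega) j.2
    have hsE : (∏ i ∈ E, Real.sin ((θ ((j:ℕ)+1) - φ i)/2)) ≠ 0 := by
      rw [Finset.prod_ne_zero_iff]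
      intro i hi
      obtain ⟨hi1, hi2⟩ := hEsub i hi
      have hfw := hφwin i hi1 hi2
      have hne' : θ ((j:ℕ)+1) ≠ φ i := hθφ _ _ (by omega) j.2 hi1 hi2
      rcases lt_or_gt_of_ne hne' with h | h
      · exact ne_of_lt (sin_half_neg (by linarith) (by linarith [hw.1, hfw.2]))
      · exact ne_of_gt (sin_half_pos (by linarith) (by linarith [hw.2, hfw.1]))
    have hsq : 0 < (∏ i ∈ E, Real.sin ((θ ((j:ℕ)+1) - φ i)/2))^2 := by
      rw [sq]
      exact mul_self_pos.mpr hsE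
    nlinarith [mul_pos (mul_pos (hωpos j) hsq) (hsgn j)]
  rcases hσ with rfl | rfl <;> rw [hT0] at hTpos <;> simp at hTpos

/-- there exist strictly positive weights `ω_1,…,ω_n` with
`∑_j ω_j Ψ_m(ζ_j) ζ_j^{-k} = 0` for every `k = 1,…,m-1`, if and only if
`{ξ_k}_{k=1}^m` strictly interlaces `{ζ_j}_{j=1}^n` on `𝕊¹` (with the chosen normalization
of arguments, the latter means every band `I_r`, `r = 1,…,m`, is nonempty). -/
theorem stmt_17 (m n : ℕ) (hm : 1 ≤ m) (hmn : m < n)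
    (θ φ : ℕ → ℝ)
    (hφ : ∀ k, 1 ≤ k → k ≤ m → φ k < φ (k + 1))
    (hφp : φ (m + 1) = φ 1 + 2 * Real.pi)
    (hθ1 : φ 1 < θ 1)
    (hθ : ∀ j, 1 ≤ j → j < n → θ j < θ (j + 1))
    (hθn : θ n < φ 1 + 2 * Real.pi)
    (hθφ : ∀ j k, 1 ≤ j → j ≤ n → 1 ≤ k → k ≤ m → θ j ≠ φ k) :
    (∃ ω : Fin n → ℝ, (∀ j, 0 < ω j) ∧
      ∀ k : ℕ, 1 ≤ k → k < m →
        ∑ j : Fin n, (ω j : ℂ) *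
          PsiC m φ (zetaC θ ((j : ℕ) + 1)) * zetaC θ ((j : ℕ) + 1) ^ (-(k : ℤ)) = 0)
    ↔ (∀ r, 1 ≤ r → r ≤ m → (bandC n θ φ r).Nonempty) := by
  classical
  constructor
  · rintro ⟨ω, hωpos, hωeq⟩
    exact forward_dir m n hm hmn θ φ hφ hφp hθ1 hθ hθn hθφ ω hωpos hωeq
  · intro hband
    -- band of each node
    have hβex := exists_band m n hm hmn θ φ hφ hφp hθ1 hθ hθn hθφ
    choose β hβ1 hβ2 hβ3 using hβex
    -- representatives of each band
    have hrep : ∀ r : ℕ, ∃ j : Fin n, 1 ≤ r → r ≤ m → j ∈ bandC n θ φ r := by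
      intro r
      by_cases h : 1 ≤ r ∧ r ≤ m
      · obtain ⟨j, hj⟩ := hband r h.1 h.2
        exact ⟨j, fun _ _ => hj⟩
      · exact ⟨⟨0, by omega⟩, fun h1 h2 => absurd ⟨h1, h2⟩ h⟩
    choose ρ hρ using hrep
    -- the configuration attached to a node
    set G : Fin n → ℕ → Fin n := fun j c => if c = β j then j else ρ c with hGdef
    have hGband : ∀ j : Fin n, ∀ c, 1 ≤ c → c ≤ m → G j c ∈ bandC n θ φ c := by
      intro j c h1 h2
      rw [hGdef]
      by_cases h : c = β j
      · simp only [if_pos h, h]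
        exact hβ3 j
      · simp only [if_neg h]
        exact hρ c h1 h2
    -- per-configuration weights
    have hconf := fun j : Fin n =>
      config_lemma m n hm hmn θ φ hφ hφp hθ1 hθ hθn hθφ (G j) (hGband j)
    choose w hwpos hweq using hconf
    -- assembled weights
    set W : Fin n → Fin n → ℝ := fun j i =>
      ∑ c ∈ (Finset.Icc 1 m).filter (fun c => G j c = i), w j c with hWdef
    have hWnonneg : ∀ j i, 0 ≤ W j i := by
      intro j i
      refine Finset.sum_nonneg fun c hc => ?_
      rw [Finset.mem_filter, Finset.mem_Icc] at hc
      exact (hwpos j c hc.1.1 hc.1.2).le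
    have hWdiag : ∀ j : Fin n, 0 < W j j := by
      intro j
      rw [hWdef]
      refine Finset.sum_pos' (fun c hc => ?_) ⟨β j, ?_, ?_⟩
      · rw [Finset.mem_filter, Finset.mem_Icc] at hc
        exact (hwpos j c hc.1.1 hc.1.2).le
      · rw [Finset.mem_filter, Finset.mem_Icc]
        refine ⟨⟨hβ1 j, hβ2 j⟩, ?_⟩
        rw [hGdef]
        simp
      · exact hwpos j (β j) (hβ1 j) (hβ2 j)
    refine ⟨fun i => ∑ j : Fin n, W j i, ?_, ?_⟩
    · intro i
      refine Finset.sum_pos' (fun j _ => hWnonneg j i) ⟨i, Finset.mem_univ i, hWdiag i⟩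
    · intro k hk1 hk2
      have hswap : ∀ j : Fin n,
          ∑ i : Fin n, (W j i : ℂ) * (PsiC m φ (zetaC θ ((i : ℕ) + 1))
            * zetaC θ ((i : ℕ) + 1) ^ (-(k : ℤ)))
          = ∑ c ∈ Finset.Icc 1 m, (w j c : ℂ) * (PsiC m φ (zetaC θ ((G j c : ℕ) + 1))
            * zetaC θ ((G j c : ℕ) + 1) ^ (-(k : ℤ))) := by
        intro j
        rw [← Finset.sum_fiberwise_of_maps_to (g := fun c => G j c)
          (t := (Finset.univ : Finset (Fin n))) (fun c _ => Finset.mem_univ _)]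
        refine Finset.sum_congr rfl fun i _ => ?_
        rw [hWdef]
        push_cast
        rw [Finset.sum_mul]
        refine Finset.sum_congr rfl fun c hc => ?_
        rw [Finset.mem_filter] at hc
        rw [hc.2]
      calc ∑ i : Fin n, ((∑ j : Fin n, W j i : ℝ) : ℂ) *
            PsiC m φ (zetaC θ ((i : ℕ) + 1)) * zetaC θ ((i : ℕ) + 1) ^ (-(k : ℤ))
          = ∑ i : Fin n, ∑ j : Fin n, (W j i : ℂ) * (PsiC m φ (zetaC θ ((i : ℕ) + 1))
              * zetaC θ ((i : ℕ) + 1) ^ (-(k : ℤ))) := by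
            refine Finset.sum_congr rfl fun i _ => ?_
            push_cast
            rw [Finset.sum_mul, Finset.sum_mul]
            refine Finset.sum_congr rfl fun j _ => ?_
            ring
        _ = ∑ j : Fin n, ∑ i : Fin n, (W j i : ℂ) * (PsiC m φ (zetaC θ ((i : ℕ) + 1))
              * zetaC θ ((i : ℕ) + 1) ^ (-(k : ℤ))) := Finset.sum_comm
        _ = ∑ j : Fin n, ∑ c ∈ Finset.Icc 1 m, (w j c : ℂ) * (PsiC m φ (zetaC θ ((G j c : ℕ) + 1))
              * zetaC θ ((G j c : ℕ) + 1) ^ (-(k : ℤ))) :=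
            Finset.sum_congr rfl fun j _ => hswap j
        _ = 0 := by
            refine Finset.sum_eq_zero fun j _ => ?_
            have := hweq j k hk1 hk2
            calc ∑ c ∈ Finset.Icc 1 m, (w j c : ℂ) * (PsiC m φ (zetaC θ ((G j c : ℕ) + 1))
                  * zetaC θ ((G j c : ℕ) + 1) ^ (-(k : ℤ)))
                = ∑ c ∈ Finset.Icc 1 m, (w j c : ℂ) * PsiC m φ (zetaC θ ((G j c : ℕ) + 1))
                  * zetaC θ ((G j c : ℕ) + 1) ^ (-(k : ℤ)) := by
                  refine Finset.sum_congr rfl fun c _ => ?_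
                  ring
              _ = 0 := this
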